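/- If h : X → Y is an η-quasisymmetric homeomorphism between metric spaces and S is a quasipacking of X with constant K, then the image cover {h(s) : s ∈ S} is a quasipacking of Y with constant depending only on K and η. (Simplified version: the property that a cover admits, for each element s, nested balls B(x_s,r_s) ⊆ s ⊆ B(x_s,K r_s) with the inner balls pairwise disjoint, is preserved under quasisymmetric maps with a new constant K' = K'(K,η).) -/

import Mathlib

open Metric

/-- `S` is a quasipacking of `X` with constant `K`: it is a cover such that each element
`s` contains a ball `B(c s, r s)` and is contained in `B(c s, K · r s)`, the inner balls
being pairwise disjoint. -/
def IsQuasipacking {X : Type*} [MetricSpace X] (S : Set (Set X)) (K : ℝ) : Prop :=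
  (∀ x : X, ∃ s ∈ S, x ∈ s) ∧
  ∃ (c : Set X → X) (r : Set X → ℝ),
    (∀ s ∈ S, 0 < r s ∧ ball (c s) (r s) ⊆ s ∧ s ⊆ ball (c s) (K * r s)) ∧
    (∀ s ∈ S, ∀ t ∈ S, s ≠ t → Disjoint (ball (c s) (r s)) (ball (c t) (r t)))

/-- The image of a quasipacking under an `η`-quasisymmetric homeomorphism is a
quasipacking, with a constant depending only on `K` and `η`. -/
theorem quasipacking_image {X Y : Type*} [MetricSpace X] [MetricSpace Y]
    (h : X → Y) (hbij : Function.Bijective h)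
    (η : ℝ → ℝ) (hη0 : η 0 = 0) (hηcont : ContinuousOn η (Set.Ici 0))
    (hηmono : StrictMonoOn η (Set.Ici 0))
    (hηsurj : Set.Ici (0 : ℝ) ⊆ η '' Set.Ici 0)
    (hqs : ∀ (x a b : X) (t : ℝ), 0 ≤ t → dist x a ≤ t * dist x b →
      dist (h x) (h a) ≤ η t * dist (h x) (h b))
    (S : Set (Set X)) (K : ℝ) (hK : 1 ≤ K) (hS : IsQuasipacking S K) :
    ∃ K' : ℝ, 1 ≤ K' ∧ IsQuasipacking ((fun s => h '' s) '' S) K' := by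
  classical
  obtain ⟨hcover, c, r, hcr, hdisj⟩ := hS
  have hinj := hbij.1
  have hsurj := hbij.2
  have ηpos : ∀ t : ℝ, 0 < t → 0 < η t := fun t ht => by
    have := hηmono (Set.mem_Ici.mpr le_rfl) (Set.mem_Ici.mpr ht.le) ht
    simpa [hη0] using this
  have hK0 : (0:ℝ) < K := lt_of_lt_of_le one_pos hK
  have hk : 0 < η K := ηpos K hK0
  set m : ℝ := max 1 (η K + 1) with hm
  have hm1 : (1:ℝ) ≤ m := le_max_left _ _
  -- key construction: inner radius for each s ∈ S
  have hkey : ∀ s : Set X, ∃ v : ℝ, s ∈ S →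
      0 < v ∧ ball (h (c s)) v ⊆ h '' ball (c s) (r s) ∧
      ∀ a ∈ s, dist (h (c s)) (h a) < m * v := by
    intro s
    by_cases hne : ((ball (c s) (r s))ᶜ).Nonempty
    · -- there is a point outside the inner ball
      set D : Set ℝ := (fun b => dist (h (c s)) (h b)) '' (ball (c s) (r s))ᶜ with hD
      refine ⟨sInf D, fun hs => ?_⟩
      obtain ⟨hr, hball, hsub⟩ := hcr s hs
      obtain ⟨b0, hb0⟩ := hne
      have hb0' : r s ≤ dist (c s) b0 := by
        rw [Set.mem_compl_iff, mem_ball, not_lt, dist_comm] at hb0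
        exact hb0
      have hcompl : ∀ b ∈ (ball (c s) (r s))ᶜ, r s ≤ dist (c s) b := by
        intro b hb
        rw [Set.mem_compl_iff, mem_ball, not_lt, dist_comm] at hb
        exact hb
      have hDne : D.Nonempty := ⟨_, ⟨b0, hb0, rfl⟩⟩
      have hDbd : BddBelow D := ⟨0, by rintro d ⟨b, -, rfl⟩; exact dist_nonneg⟩
      set t0 : ℝ := dist (c s) b0 / r s with ht0
      have ht0pos : 0 < t0 := div_pos (lt_of_lt_of_le hr hb0') hr
      have hcb0 : c s ≠ b0 := dist_pos.mp (lt_of_lt_of_le hr hb0')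
      have hdist0 : 0 < dist (h (c s)) (h b0) :=
        dist_pos.mpr fun e => hcb0 (hinj e)
      set δ : ℝ := dist (h (c s)) (h b0) / η t0 with hδ
      have hδpos : 0 < δ := div_pos hdist0 (ηpos _ ht0pos)
      have hδle : ∀ d ∈ D, δ ≤ d := by
        rintro d ⟨b, hb, rfl⟩
        have h1 : dist (c s) b0 ≤ t0 * dist (c s) b := by
          have : t0 * r s = dist (c s) b0 := div_mul_cancel₀ _ hr.ne'
          calc dist (c s) b0 = t0 * r s := this.symm
            _ ≤ t0 * dist (c s) b :=
              mul_le_mul_of_nonneg_left (hcompl b hb) ht0pos.le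
        have h2 := hqs (c s) b0 b t0 ht0pos.le h1
        rw [div_le_iff₀ (ηpos _ ht0pos)]
        calc dist (h (c s)) (h b0) ≤ η t0 * dist (h (c s)) (h b) := h2
          _ = dist (h (c s)) (h b) * η t0 := mul_comm _ _
      have hpos : 0 < sInf D := lt_of_lt_of_le hδpos (le_csInf hDne hδle)
      refine ⟨hpos, ?_, ?_⟩
      · intro z hz
        obtain ⟨b, rfl⟩ := hsurj z
        by_cases hb : b ∈ ball (c s) (r s)
        · exact ⟨b, hb, rfl⟩
        · exfalso
          have h1 : sInf D ≤ dist (h (c s)) (h b) := csInf_le hDbd ⟨b, hb, rfl⟩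
          rw [mem_ball, dist_comm] at hz
          exact absurd (lt_of_le_of_lt h1 hz) (lt_irrefl _)
      · intro a ha
        have h1 : ∀ d ∈ D, dist (h (c s)) (h a) / η K ≤ d := by
          rintro d ⟨b, hb, rfl⟩
          have h2 : dist (c s) a ≤ K * dist (c s) b := by
            have h3 : dist (c s) a < K * r s := by
              have := hsub ha; rw [mem_ball, dist_comm] at this; exact this
            have h4 : K * r s ≤ K * dist (c s) b :=
              mul_le_mul_of_nonneg_left (hcompl b hb) hK0.le
            linarith
          have h5 := hqs (c s) a b K hK0.le h2
          rw [div_le_iff₀ hk]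
          calc dist (h (c s)) (h a) ≤ η K * dist (h (c s)) (h b) := h5
            _ = dist (h (c s)) (h b) * η K := mul_comm _ _
        have h6 : dist (h (c s)) (h a) / η K ≤ sInf D := le_csInf hDne h1
        have h7 : dist (h (c s)) (h a) ≤ η K * sInf D := by
          rw [div_le_iff₀ hk] at h6; linarith [h6]
        have h8 : η K * sInf D < (η K + 1) * sInf D := by nlinarith
        have h9 : (η K + 1) * sInf D ≤ m * sInf D :=
          mul_le_mul_of_nonneg_right (le_max_right _ _) hpos.le
        linarith
    · -- the inner ball is all of X
      have hall : ∀ a : X, a ∈ ball (c s) (r s) := by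
        intro a; by_contra hc'; exact hne ⟨a, hc'⟩
      set f : X → ℝ := fun a => dist (h (c s)) (h a) with hf
      refine ⟨sSup (Set.range f) + 1, fun hs => ?_⟩
    
      obtain ⟨hr, hball, hsub⟩ := hcr s hs
      have hBdd : BddAbove (Set.range f) := by
        by_cases hX : ∃ b0, b0 ≠ c s
        · obtain ⟨b0, hb0⟩ := hX
          have hd0 : 0 < dist (c s) b0 := dist_pos.mpr hb0.symm
          set t1 : ℝ := r s / dist (c s) b0 with ht1
          have ht1pos : 0 < t1 := div_pos hr hd0
          refine ⟨η t1 * dist (h (c s)) (h b0), ?_⟩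
          rintro x ⟨a, rfl⟩
          have h1 : dist (c s) a ≤ t1 * dist (c s) b0 := by
            have h2 : t1 * dist (c s) b0 = r s := div_mul_cancel₀ _ hd0.ne'
            have h3 := hall a; rw [mem_ball, dist_comm] at h3
            linarith
          exact hqs (c s) a b0 t1 ht1pos.le h1
        · push_neg at hX
          refine ⟨0, ?_⟩
          rintro x ⟨a, rfl⟩
          simp [hf, hX a]
      have hSup0 : (0:ℝ) ≤ sSup (Set.range f) := by
        have : (0:ℝ) ∈ Set.range f := ⟨c s, dist_self _⟩
        exact le_csSup hBdd this
      have hpos : 0 < sSup (Set.range f) + 1 := by linarith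
      refine ⟨hpos, ?_, ?_⟩
      · intro z hz
        obtain ⟨b, rfl⟩ := hsurj z
        exact ⟨b, hall b, rfl⟩
      · intro a ha
        have h1 : dist (h (c s)) (h a) ≤ sSup (Set.range f) :=
          le_csSup hBdd ⟨a, rfl⟩
        nlinarith
  choose ρ hkey using hkey
  refine ⟨m, hm1, ?_, ?_⟩
  · -- cover
    intro y
    obtain ⟨x, rfl⟩ := hsurj y
    obtain ⟨s, hs, hx⟩ := hcover x
    exact ⟨h '' s, ⟨s, hs, rfl⟩, ⟨x, hx, rfl⟩⟩
  · -- choose preimages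
    have hpre : ∀ T : Set Y, ∃ u : Set X,
        T ∈ ((fun s => h '' s) '' S) → u ∈ S ∧ h '' u = T := by
      intro T
      by_cases hT : T ∈ ((fun s => h '' s) '' S)
      · obtain ⟨s, hs, hsT⟩ := hT
        exact ⟨s, fun _ => ⟨hs, hsT⟩⟩
      · exact ⟨∅, fun hc' => absurd hc' hT⟩
    choose p hp using hpre
    refine ⟨fun T => h (c (p T)), fun T => ρ (p T), ?_, ?_⟩
    · intro T hT
      obtain ⟨hps, hpT⟩ := hp T hT
      set u := p T with hu
      obtain ⟨hpos, hball, houter⟩ := hkey _ hps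
      refine ⟨hpos, ?_, ?_⟩
      · refine hball.trans ?_
        rw [← hpT]
        exact Set.image_mono (hcr u hps).2.1
      · show T ⊆ ball (h (c u)) (m * ρ u)
        rw [← hpT]
        rintro y ⟨a, ha, rfl⟩
        rw [mem_ball, dist_comm]
        exact houter a ha
    · intro T hT T' hT' hTne
      obtain ⟨hps, hpT⟩ := hp T hT
      obtain ⟨hps', hpT'⟩ := hp T' hT'
      have hST : p T ≠ p T' := fun e => hTne (by rw [← hpT, ← hpT', e])
      have hd := hdisj _ hps _ hps' hST
      have h1 := (hkey _ hps).2.1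
      have h2 := (hkey _ hps').2.1
      exact Disjoint.mono h1 h2 (Set.disjoint_image_of_injective hinj hd)
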